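/- The monomials γ_1^{i_1} γ_2^{i_2} ⋯ γ_N^{i_N} with each i_k ∈ {0,1} form a vector space basis of the FRT–Clifford algebra Cl_N(q,c); in particular dim_ℂ Cl_N(q,c) = 2^N. -/

import Mathlib

noncomputable section

namespace FRT

/-- The "dual" index `i' = N+1-i` (0-indexed: `N-1-i`). -/
def dual {N : ℕ} (i : Fin N) : Fin N := ⟨N - 1 - i.val, by have := i.2; omega⟩

/-- Generators of the free algebra. -/
def gen {N : ℕ} (i : Fin N) : FreeAlgebra ℂ (Fin N) := FreeAlgebra.ι ℂ i

/-- The sum `∑_{k<i} q^{2k-2i+2} γ_k γ_{k'}` appearing in the defining relations. -/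
def pairSum (N : ℕ) (q : ℂ) (i : Fin N) : FreeAlgebra ℂ (Fin N) :=
  ∑ k ∈ Finset.Iio i, (q ^ (2 * (k.val : ℤ) - 2 * (i.val : ℤ) + 2)) • (gen k * gen (dual k))

/-- The defining relations of the FRT–Clifford algebra `Cl_N(q,c)`. -/
inductive Rel (N : ℕ) (q c : ℂ) : FreeAlgebra ℂ (Fin N) → FreeAlgebra ℂ (Fin N) → Prop
  | sq (i : Fin N) (h : 2 * i.val + 1 ≠ N) : Rel N q c (gen i * gen i) 0
  | swap (i j : Fin N) (hlt : i < j) (h : i.val + j.val + 1 ≠ N) :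
      Rel N q c (gen j * gen i) ((-(q ^ 2)) • (gen i * gen j))
  | pair (i : Fin N) (h : 2 * i.val + 1 < N) :
      Rel N q c (gen (dual i) * gen i)
        (-(gen i * gen (dual i)) + (q ^ 2 - q⁻¹ ^ 2) • pairSum N q i +
          algebraMap ℂ _ (c ^ 2 * q ^ ((N : ℤ) - 2 * (i.val : ℤ) - 1) * (q + q⁻¹)))
  | middle (i : Fin N) (h : 2 * i.val + 1 = N) :
      Rel N q c (gen i * gen i) ((q - q⁻¹) • pairSum N q i + algebraMap ℂ _ (c ^ 2))

/-- The FRT–Clifford algebra `Cl_N(q,c)`. -/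
abbrev Cl (N : ℕ) (q c : ℂ) := RingQuot (Rel N q c)

/-- The generators `γ_i` of `Cl_N(q,c)`. -/
def γ (N : ℕ) (q c : ℂ) (i : Fin N) : Cl N q c :=
  RingQuot.mkAlgHom ℂ (Rel N q c) (gen i)

/-- Ordered product `γ_1 γ_2 ⋯ γ_m` of the first `m` generators. -/
def prodFirst (N : ℕ) (q c : ℂ) (m : ℕ) : Cl N q c :=
  (((List.finRange N).take m).map (γ N q c)).prod

/-- Ordered product `γ_{m+1} γ_{m+2} ⋯ γ_N` (0-indexed: indices `m,…,N-1`). -/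
def prodFrom (N : ℕ) (q c : ℂ) (m : ℕ) : Cl N q c :=
  (((List.finRange N).drop m).map (γ N q c)).prod

/-- The ordered monomial `γ_1^{i_1} ⋯ γ_N^{i_N}` for `i ∈ {0,1}^N`. -/
def monoB (N : ℕ) (q c : ℂ) (f : Fin N → Bool) : Cl N q c :=
  ((List.finRange N).map (fun i => if f i then γ N q c i else 1)).prod

/-- The ordered monomial `γ_1^{i_1} ⋯ γ_n^{i_n}` for `i ∈ {0,1}^n`, `n ≤ N`. -/
def monoLow (N : ℕ) (q c : ℂ) {n : ℕ} (h : n ≤ N) (f : Fin n → Bool) : Cl N q c :=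
  ((List.finRange n).map (fun j => if f j then γ N q c (Fin.castLE h j) else 1)).prod

/-- `z` is homogeneous of `∂_i`-degree `0`: it is fixed by every algebra endomorphism
rescaling `γ_i` by `t` and `γ_{i'}` by `t⁻¹`. -/
def DegZeroAt (N : ℕ) (q c : ℂ) (i : ℕ) (z : Cl N q c) : Prop :=
  ∀ t : ℂ, t ≠ 0 → ∀ f : Cl N q c →ₐ[ℂ] Cl N q c,
    (∀ j : Fin N, f (γ N q c j) =
      (if j.val = i then t else if j.val + i + 1 = N then t⁻¹ else 1) • γ N q c j) →
    f z = z




section Rep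
variable {N : ℕ} (q c : ℂ)

/-- representation space -/
abbrev V (N : ℕ) := (Fin N → Bool) → ℂ

def flipS (a : Fin N) (T : Fin N → Bool) : Fin N → Bool := Function.update T a (!T a)

def cntn (j : ℕ) (t : ℕ → Bool) : ℕ := ∑ k ∈ Finset.range j, (if t k then 1 else 0)

def tN (T : Fin N → Bool) : ℕ → Bool := fun k => if h : k < N then T ⟨k, h⟩ else false

def cnt (a : Fin N) (T : Fin N → Bool) : ℕ := cntn a.val (tN T)

lemma flipS_self (a : Fin N) (T : Fin N → Bool) : flipS a T a = !T a := by
  simp [flipS]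

lemma flipS_ne {a b : Fin N} (h : b ≠ a) (T : Fin N → Bool) : flipS a T b = T b := by
  simp [flipS, Function.update_of_ne h]

lemma flipS_flipS (a : Fin N) (T : Fin N → Bool) : flipS a (flipS a T) = T := by
  funext b
  by_cases hb : b = a
  · subst hb; simp [flipS]
  · simp [flipS_ne hb]

lemma flipS_comm {a b : Fin N} (T : Fin N → Bool) :
    flipS a (flipS b T) = flipS b (flipS a T) := by
  by_cases hab : a = b
  · subst hab; rfl
  · funext x
    by_cases hx : x = a
    · subst hx
      rw [flipS_self, flipS_ne hab, flipS_ne hab, flipS_self]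
    · by_cases hx' : x = b
      · subst hx'
        rw [flipS_ne hx, flipS_self, flipS_self, flipS_ne hx]
      · rw [flipS_ne hx, flipS_ne hx', flipS_ne hx', flipS_ne hx]

lemma tN_flipS (a : Fin N) (T : Fin N → Bool) (k : ℕ) :
    tN (flipS a T) k = if k = a.val then !T a else tN T k := by
  unfold tN
  by_cases hk : k < N
  · simp only [dif_pos hk]
    by_cases hka : k = a.val
    · have : (⟨k, hk⟩ : Fin N) = a := by exact Fin.ext hka
      rw [this, flipS_self, if_pos hka]
    · rw [flipS_ne (by exact fun hh => hka (by simpa using congrArg Fin.val hh)), if_neg hka]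
  · have : k ≠ a.val := by have := a.2; omega
    simp [dif_neg hk, this]

lemma cnt_flip_of_le {a b : Fin N} (h : a ≤ b) (T : Fin N → Bool) :
    cnt a (flipS b T) = cnt a T := by
  unfold cnt cntn
  apply Finset.sum_congr rfl
  intro k hk
  rw [tN_flipS]
  have : k ≠ b.val := by
    simp only [Finset.mem_range] at hk
    have : a.val ≤ b.val := h
    omega
  rw [if_neg this]

lemma cnt_flip_of_lt {a b : Fin N} (h : b < a) (T : Fin N → Bool) :
    cnt a (flipS b T) + (if T b then 1 else 0) = cnt a T + (if T b then 0 else 1) := by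
  unfold cnt cntn
  have hb : b.val ∈ Finset.range a.val := by
    simp only [Finset.mem_range]; exact h
  rw [Finset.sum_eq_sum_sdiff_singleton_add hb, Finset.sum_eq_sum_sdiff_singleton_add hb
    (fun k => if tN T k then 1 else 0)]
  have hsame : ∑ k ∈ Finset.range a.val \ {b.val}, (if tN (flipS b T) k then 1 else 0)
      = ∑ k ∈ Finset.range a.val \ {b.val}, (if tN T k then 1 else 0) := by
    apply Finset.sum_congr rfl
    intro k hk
    simp only [Finset.mem_sdiff, Finset.mem_singleton] at hk
    rw [tN_flipS, if_neg hk.2]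
  rw [hsame]
  have h1 : tN (flipS b T) b.val = !T b := by
    rw [tN_flipS, if_pos rfl]
  have h2 : tN T b.val = T b := by
    unfold tN; simp only [dif_pos b.2]
  rw [h1, h2]
  cases hTb : T b <;> simp [hTb] <;> omega

/-- generalized creation/annihilation operator at slot `a` -/
def genOp (a : Fin N) (x y : ℂ) : V N →ₗ[ℂ] V N where
  toFun f := fun T => (-q^2)^(cnt a T) * (if T a then x else y) * f (flipS a T)
  map_add' f g := by funext T; simp [mul_add]
  map_smul' r f := by funext T; simp [smul_eq_mul]; ring

lemma genOp_apply (a : Fin N) (x y : ℂ) (f : V N) (T : Fin N → Bool) :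
    genOp q a x y f T = (-q^2)^(cnt a T) * (if T a then x else y) * f (flipS a T) := rfl

end Rep

section PartB
variable {N : ℕ} (q c : ℂ)

def crC (N : ℕ) (c : ℂ) (i : Fin N) : ℂ :=
  if 2*i.val+1 < N then 1 else if 2*i.val+1 = N then c else 0

def anC (c : ℂ) {N : ℕ} (i : Fin N) : ℂ :=
  if 2*i.val+1 < N then 0 else if 2*i.val+1 = N then c
  else c^2 * q^(2*(i.val:ℤ) - N + 1) * (q + q⁻¹)

def slotI {N : ℕ} (i : Fin N) : Fin N := if 2*i.val+1 ≤ N then i else dual i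

def Γop (i : Fin N) : Module.End ℂ (V N) := genOp q (slotI i) (crC N c i) (anC q c i)

lemma dual_val (i : Fin N) : (dual i).val = N - 1 - i.val := rfl

lemma dual_dual (i : Fin N) : dual (dual i) = i := by
  apply Fin.ext; have := i.2; simp [dual_val]; omega

lemma dual_SH_of_FH {i : Fin N} (h : 2*i.val+1 < N) : N < 2*(dual i).val+1 := by
  have := i.2; rw [dual_val]; omega

lemma slot_FH {i : Fin N} (h : 2*i.val+1 ≤ N) : slotI i = i := if_pos h

lemma slot_SH {i : Fin N} (h : N < 2*i.val+1) : slotI i = dual i := if_neg (by omega)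

lemma slot_dual_FH {i : Fin N} (h : 2*i.val+1 < N) : slotI (dual i) = i := by
  rw [slot_SH (dual_SH_of_FH h), dual_dual]

lemma crC_FH {i : Fin N} (h : 2*i.val+1 < N) : crC N c i = 1 := by
  simp [crC, h]
lemma anC_FH {i : Fin N} (h : 2*i.val+1 < N) : anC q c i = 0 := by
  simp [anC, h]
lemma crC_SH {i : Fin N} (h : N < 2*i.val+1) : crC N c i = 0 := by
  have h1 : ¬ (2*i.val+1 < N) := by omega
  have h2 : ¬ (2*i.val+1 = N) := by omega
  simp [crC, h1, h2]
lemma anC_SH {i : Fin N} (h : N < 2*i.val+1) :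
    anC q c i = c^2 * q^(2*(i.val:ℤ) - N + 1) * (q + q⁻¹) := by
  have h1 : ¬ (2*i.val+1 < N) := by omega
  have h2 : ¬ (2*i.val+1 = N) := by omega
  simp [anC, h1, h2]
lemma crC_mid {i : Fin N} (h : 2*i.val+1 = N) : crC N c i = c := by
  simp [crC, h]
lemma anC_mid {i : Fin N} (h : 2*i.val+1 = N) : anC q c i = c := by
  simp [anC, h]

lemma anC_dual_FH {i : Fin N} (h : 2*i.val+1 < N) :
    anC q c (dual i) = c^2 * q^((N:ℤ) - 2*(i.val:ℤ) - 1) * (q + q⁻¹) := by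
  rw [anC_SH q c (dual_SH_of_FH h)]
  congr 2
  have h2 := i.2
  have hd : (dual i).val = N - 1 - i.val := rfl
  have hv : (2*(((dual i).val):ℤ) - N + 1) = ((N:ℤ) - 2*(i.val:ℤ) - 1) := by omega
  rw [hv]

/-- first swap lemma: inner slot below outer slot, inner op pure creation -/
lemma swap1 {a b : Fin N} (hab : a < b) (x y x' y' : ℂ) (hy : y = 0) :
    (genOp q b x' y' * genOp q a x y : Module.End ℂ (V N))
      = (-q^2) • (genOp q a x y * genOp q b x' y') := by
  subst hy
  apply LinearMap.ext; intro f; funext T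
  have hne : a ≠ b := ne_of_lt hab
  rw [Module.End.mul_apply, LinearMap.smul_apply, Module.End.mul_apply]
  simp only [genOp_apply, Pi.smul_apply, smul_eq_mul]
  rw [cnt_flip_of_le (le_of_lt hab), flipS_ne hne, flipS_comm, flipS_ne hne.symm]
  by_cases hTa : T a
  · have hcnt : cnt b (flipS a T) + 1 = cnt b T := by
      have := cnt_flip_of_lt hab T
      rw [if_pos hTa, if_pos hTa] at this; omega
    rw [← hcnt, pow_succ, if_pos hTa]
    ring
  · rw [if_neg hTa]
    ring

/-- second swap lemma: outer slot below inner slot, outer op pure annihilation -/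
lemma swap2 {a b : Fin N} (hab : b < a) (x y x' y' : ℂ) (hx' : x' = 0) :
    (genOp q b x' y' * genOp q a x y : Module.End ℂ (V N))
      = (-q^2) • (genOp q a x y * genOp q b x' y') := by
  subst hx'
  apply LinearMap.ext; intro f; funext T
  have hne : b ≠ a := ne_of_lt hab
  rw [Module.End.mul_apply, LinearMap.smul_apply, Module.End.mul_apply]
  simp only [genOp_apply, Pi.smul_apply, smul_eq_mul]
  rw [cnt_flip_of_le (le_of_lt hab), flipS_ne hne, flipS_comm, flipS_ne hne.symm]
  by_cases hTb : T b
  · rw [if_pos hTb]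
    ring
  · have hcnt : cnt a (flipS b T) = cnt a T + 1 := by
      have := cnt_flip_of_lt hab T
      rw [if_neg hTb, if_neg hTb] at this; omega
    rw [hcnt, pow_succ, if_neg hTb]
    ring

lemma genOp_mul_same_apply (a : Fin N) (x y x' y' : ℂ) (f : V N) (T : Fin N → Bool) :
    (genOp q a x' y' * genOp q a x y : Module.End ℂ (V N)) f T
      = (-q^2)^(2 * cnt a T) * (if T a then x' * y else y' * x) * f T := by
  rw [Module.End.mul_apply]
  simp only [genOp_apply]
  rw [cnt_flip_of_le (le_refl a), flipS_self, flipS_flipS, two_mul, pow_add]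
  by_cases hTa : T a <;> simp [hTa] <;> ring

lemma core_identity (q4 : ℂ) (t : ℕ → Bool) (j : ℕ) :
    (q4)^(cntn j t) = 1 + (q4 - 1) * ∑ k ∈ Finset.range j, (if t k then (q4)^(cntn k t) else 0) := by
  induction j with
  | zero => simp [cntn]
  | succ n ih =>
    have hc : cntn (n+1) t = cntn n t + (if t n then 1 else 0) := by
      unfold cntn; rw [Finset.sum_range_succ]
    rw [Finset.sum_range_succ, hc]
    cases htn : t n
    · simp only [htn, Bool.false_eq_true, if_false, add_zero, pow_zero]
      simpa using ih
    · simp only [htn, if_true]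
      rw [pow_succ, ih]
      ring

lemma sum_Iio_to_range (i : Fin N) (g : Fin N → ℂ) :
    ∑ k ∈ Finset.Iio i, g k = ∑ k ∈ Finset.range i.val, (if h : k < N then g ⟨k,h⟩ else 0) := by
  refine Finset.sum_bij' (i := fun (k : Fin N) (hk : k ∈ Finset.Iio i) => k.val)
    (j := fun k hk => (⟨k, by simp only [Finset.mem_range] at hk; omega⟩ : Fin N)) ?_ ?_ ?_ ?_ ?_
  · intro a ha
    simp only [Finset.mem_Iio] at ha
    simpa [Finset.mem_range] using ha
  · intro a ha
    simp only [Finset.mem_range] at ha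
    simp only [Finset.mem_Iio]
    exact ha
  · intro a ha; apply Fin.ext; rfl
  · intro a ha; rfl
  · intro a ha
    rw [dif_pos a.2]

lemma coreFin (i : Fin N) (T : Fin N → Bool) :
    ((q^4 : ℂ))^(cnt i T)
      = 1 + (q^4 - 1) * ∑ k ∈ Finset.Iio i, (if T k then (q^4 : ℂ)^(cnt k T) else 0) := by
  have hs : ∑ k ∈ Finset.Iio i, (if T k then (q^4 : ℂ)^(cnt k T) else 0)
      = ∑ k ∈ Finset.range i.val, (if tN T k then (q^4 : ℂ)^(cntn k (tN T)) else 0) := by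
    rw [sum_Iio_to_range]
    apply Finset.sum_congr rfl
    intro k hk
    have hkN : k < N := lt_trans (Finset.mem_range.mp hk) i.2
    rw [dif_pos hkN]
    have ht : tN T k = T ⟨k, hkN⟩ := by unfold tN; rw [dif_pos hkN]
    rw [ht]
    rfl
  rw [hs]
  exact core_identity (q^4) (tN T) i.val

end PartB

section PartC
variable {N : ℕ} (q c : ℂ)

lemma swap_classify {i j : Fin N} (hlt : i < j) (hij : i.val + j.val + 1 ≠ N) :
    (slotI i < slotI j ∧ anC q c i = 0) ∨ (slotI j < slotI i ∧ crC N c j = 0) := by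
  have hiv : i.val < j.val := hlt
  have hjN := j.2
  have hiN := i.2
  by_cases hj : 2*j.val+1 ≤ N
  · left
    have hi : 2*i.val+1 < N := by omega
    refine ⟨?_, anC_FH q c hi⟩
    rw [slot_FH (le_of_lt hi), slot_FH hj]
    exact hlt
  · have hjSH : N < 2*j.val+1 := by omega
    rw [slot_SH hjSH]
    by_cases hi : 2*i.val+1 < N
    · rw [slot_FH (le_of_lt hi)]
      by_cases hlt2 : i.val < (dual j).val
      · left; exact ⟨hlt2, anC_FH q c hi⟩
      · right
        refine ⟨?_, crC_SH c hjSH⟩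
        have hdj : (dual j).val = N - 1 - j.val := rfl
        have : (dual j).val < i.val := by omega
        exact this
    · right
      refine ⟨?_, crC_SH c hjSH⟩
      by_cases him : 2*i.val+1 ≤ N
      · rw [slot_FH him]
        have hdj : (dual j).val = N - 1 - j.val := rfl
        have : (dual j).val < i.val := by omega
        exact this
      · rw [slot_SH (by omega)]
        have hdj : (dual j).val = N - 1 - j.val := rfl
        have hdi : (dual i).val = N - 1 - i.val := rfl
        have : (dual j).val < (dual i).val := by omega
        exact this

def Lfree : FreeAlgebra ℂ (Fin N) →ₐ[ℂ] Module.End ℂ (V N) :=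
  FreeAlgebra.lift ℂ (fun i => Γop q c i)

lemma Lfree_gen (i : Fin N) : Lfree q c (gen i) = Γop q c i := by
  unfold Lfree gen
  exact FreeAlgebra.lift_ι_apply _ _

lemma pow_neg_q_sq (m : ℕ) : ((-q^2 : ℂ))^(2*m) = ((q^4 : ℂ))^m := by
  rw [pow_mul]
  congr 1
  ring

lemma Lfree_rel (hq : q ≠ 0) : ∀ ⦃x y : FreeAlgebra ℂ (Fin N)⦄,
    Rel N q c x y → Lfree q c x = Lfree q c y := by
  have hqq : q * q⁻¹ = 1 := mul_inv_cancel₀ hq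
  intro x y hr
  cases hr with
  | sq i hi =>
    simp only [map_mul, map_zero, Lfree_gen]
    apply LinearMap.ext; intro f; funext T
    show (Γop q c i * Γop q c i) f T = (0 : Module.End ℂ (V N)) f T
    unfold Γop
    rw [genOp_mul_same_apply]
    have hz : (if T (slotI i) then crC N c i * anC q c i else anC q c i * crC N c i) = 0 := by
      rcases Nat.lt_or_ge (2*i.val+1) N with hlt | hge
      · rw [anC_FH q c hlt]; simp
      · have hSH : N < 2*i.val+1 := by omega
        rw [crC_SH c hSH]; simp
    rw [hz]
    simp
  | swap i j hlt hij =>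
    simp only [map_smul, map_mul, Lfree_gen]
    rcases swap_classify q c hlt hij with ⟨hs, ha⟩ | ⟨hs, hcr⟩
    · exact swap1 q hs (crC N c i) (anC q c i) (crC N c j) (anC q c j) ha
    · exact swap2 q hs (crC N c i) (anC q c i) (crC N c j) (anC q c j) hcr
  | pair i hi =>
    rw [map_add, map_add, map_neg, map_mul, map_mul, map_smul]
    rw [Lfree_gen, Lfree_gen, AlgHom.commutes]
    have e1 : Γop q c (dual i) = genOp q i 0 (anC q c (dual i)) := by
      unfold Γop
      rw [slot_dual_FH hi, crC_SH c (dual_SH_of_FH hi)]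
    have e2 : Γop q c i = genOp q i 1 0 := by
      unfold Γop
      rw [slot_FH (le_of_lt hi), crC_FH c hi, anC_FH q c hi]
    have hps : Lfree q c (pairSum N q i)
        = ∑ k ∈ Finset.Iio i, (q ^ (2*(k.val:ℤ) - 2*(i.val:ℤ) + 2)) •
            ((genOp q k 1 0 * genOp q k 0 (anC q c (dual k))) : Module.End ℂ (V N)) := by
      unfold pairSum
      rw [map_sum]
      apply Finset.sum_congr rfl
      intro k hk
      have hkv0 : k < i := Finset.mem_Iio.mp hk
      have hkv : k.val < i.val := hkv0
      have hkFH : 2*k.val+1 < N := by omega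
      have ek1 : Γop q c k = genOp q k 1 0 := by
        unfold Γop
        rw [slot_FH (le_of_lt hkFH), crC_FH c hkFH, anC_FH q c hkFH]
      have ek2 : Γop q c (dual k) = genOp q k 0 (anC q c (dual k)) := by
        unfold Γop
        rw [slot_dual_FH hkFH, crC_SH c (dual_SH_of_FH hkFH)]
      rw [map_smul, map_mul, Lfree_gen, Lfree_gen, ek1, ek2]
    rw [hps, e1, e2]
    apply LinearMap.ext; intro f; funext T
    simp only [LinearMap.add_apply, LinearMap.neg_apply, LinearMap.smul_apply,
      LinearMap.sum_apply, Pi.add_apply, Pi.neg_apply, Pi.smul_apply, smul_eq_mul,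
      Finset.sum_apply, Module.algebraMap_end_apply, genOp_mul_same_apply q,
      mul_zero, zero_mul, one_mul, mul_one]
    have hpull : ∑ k ∈ Finset.Iio i, (q ^ (2*(k.val:ℤ) - 2*(i.val:ℤ) + 2)) *
          ((-q^2 : ℂ)^(2 * cnt k T) * (if T k then anC q c (dual k) else 0) * f T)
        = (∑ k ∈ Finset.Iio i, (q ^ (2*(k.val:ℤ) - 2*(i.val:ℤ) + 2)) *
            ((-q^2 : ℂ)^(2 * cnt k T) * (if T k then anC q c (dual k) else 0))) * f T := by
      rw [Finset.sum_mul]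
      apply Finset.sum_congr rfl
      intro k hk
      ring
    rw [hpull]
    have hSig : (∑ k ∈ Finset.Iio i, (q ^ (2*(k.val:ℤ) - 2*(i.val:ℤ) + 2)) *
            ((-q^2 : ℂ)^(2 * cnt k T) * (if T k then anC q c (dual k) else 0)))
        = c^2*(q+q⁻¹)*q^((N:ℤ) - 2*(i.val:ℤ) + 1) *
            ∑ k ∈ Finset.Iio i, (if T k then ((q^4:ℂ))^(cnt k T) else 0) := by
      rw [Finset.mul_sum]
      apply Finset.sum_congr rfl
      intro k hk
      have hkv0 : k < i := Finset.mem_Iio.mp hk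
      have hkv : k.val < i.val := hkv0
      have hkFH : 2*k.val+1 < N := by omega
      rw [anC_dual_FH q c hkFH, pow_neg_q_sq]
      by_cases hTk : T k
      · rw [if_pos hTk, if_pos hTk]
        have hee : (q:ℂ) ^ (2*(k.val:ℤ) - 2*(i.val:ℤ) + 2) * q^((N:ℤ) - 2*(k.val:ℤ) - 1)
            = q^((N:ℤ) - 2*(i.val:ℤ) + 1) := by
          rw [← zpow_add₀ hq]
          congr 1
          ring
        linear_combination (c^2*(q+q⁻¹)*((q^4:ℂ))^(cnt k T)) * hee
      · rw [if_neg hTk, if_neg hTk]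
        ring
    rw [hSig]
    have hsplit : (q:ℂ) ^ ((N:ℤ) - 2*(i.val:ℤ) + 1)
        = q ^ ((N:ℤ) - 2*(i.val:ℤ) - 1) * q^2 := by
      rw [show ((N:ℤ) - 2*(i.val:ℤ) + 1) = ((N:ℤ) - 2*(i.val:ℤ) - 1) + (2:ℤ) by ring,
        zpow_add₀ hq, show (2:ℤ) = ((2:ℕ):ℤ) by norm_num, zpow_natCast]
    rw [hsplit, pow_neg_q_sq, anC_dual_FH q c hi]
    have hcore := coreFin q i T
    by_cases hTi : T i
    · rw [if_pos hTi, if_pos hTi]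
      set S0 := ∑ k ∈ Finset.Iio i, (if T k then ((q^4:ℂ))^(cnt k T) else 0) with hS0
      linear_combination (f T * c^2*(q^((N:ℤ) - 2*(i.val:ℤ) - 1))*(q+q⁻¹)) * hcore
        + (f T * c^2*(q^((N:ℤ) - 2*(i.val:ℤ) - 1))*(q+q⁻¹)*S0*(q*q⁻¹+1)) * hqq
    · rw [if_neg hTi, if_neg hTi]
      set S0 := ∑ k ∈ Finset.Iio i, (if T k then ((q^4:ℂ))^(cnt k T) else 0) with hS0
      linear_combination (f T * c^2*(q^((N:ℤ) - 2*(i.val:ℤ) - 1))*(q+q⁻¹)) * hcore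
        + (f T * c^2*(q^((N:ℤ) - 2*(i.val:ℤ) - 1))*(q+q⁻¹)*S0*(q*q⁻¹+1)) * hqq
  | middle i hi =>
    rw [map_add, map_mul, map_smul]
    rw [Lfree_gen, AlgHom.commutes]
    have e2 : Γop q c i = genOp q i c c := by
      unfold Γop
      rw [slot_FH (le_of_eq hi), crC_mid c hi, anC_mid q c hi]
    have hps : Lfree q c (pairSum N q i)
        = ∑ k ∈ Finset.Iio i, (q ^ (2*(k.val:ℤ) - 2*(i.val:ℤ) + 2)) •
            ((genOp q k 1 0 * genOp q k 0 (anC q c (dual k))) : Module.End ℂ (V N)) := by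
      unfold pairSum
      rw [map_sum]
      apply Finset.sum_congr rfl
      intro k hk
      have hkv0 : k < i := Finset.mem_Iio.mp hk
      have hkv : k.val < i.val := hkv0
      have hkFH : 2*k.val+1 < N := by omega
      have ek1 : Γop q c k = genOp q k 1 0 := by
        unfold Γop
        rw [slot_FH (le_of_lt hkFH), crC_FH c hkFH, anC_FH q c hkFH]
      have ek2 : Γop q c (dual k) = genOp q k 0 (anC q c (dual k)) := by
        unfold Γop
        rw [slot_dual_FH hkFH, crC_SH c (dual_SH_of_FH hkFH)]
      rw [map_smul, map_mul, Lfree_gen, Lfree_gen, ek1, ek2]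
    rw [hps, e2]
    apply LinearMap.ext; intro f; funext T
    simp only [LinearMap.add_apply, LinearMap.smul_apply,
      LinearMap.sum_apply, Pi.add_apply, Pi.smul_apply, smul_eq_mul,
      Finset.sum_apply, Module.algebraMap_end_apply, genOp_mul_same_apply q,
      mul_zero, zero_mul, one_mul, mul_one, ite_self]
    have hpull : ∑ k ∈ Finset.Iio i, (q ^ (2*(k.val:ℤ) - 2*(i.val:ℤ) + 2)) *
          ((-q^2 : ℂ)^(2 * cnt k T) * (if T k then anC q c (dual k) else 0) * f T)
        = (∑ k ∈ Finset.Iio i, (q ^ (2*(k.val:ℤ) - 2*(i.val:ℤ) + 2)) *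
            ((-q^2 : ℂ)^(2 * cnt k T) * (if T k then anC q c (dual k) else 0))) * f T := by
      rw [Finset.sum_mul]
      apply Finset.sum_congr rfl
      intro k hk
      ring
    rw [hpull]
    have hSig : (∑ k ∈ Finset.Iio i, (q ^ (2*(k.val:ℤ) - 2*(i.val:ℤ) + 2)) *
            ((-q^2 : ℂ)^(2 * cnt k T) * (if T k then anC q c (dual k) else 0)))
        = c^2*(q+q⁻¹)*q^((N:ℤ) - 2*(i.val:ℤ) + 1) *
            ∑ k ∈ Finset.Iio i, (if T k then ((q^4:ℂ))^(cnt k T) else 0) := by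
      rw [Finset.mul_sum]
      apply Finset.sum_congr rfl
      intro k hk
      have hkv0 : k < i := Finset.mem_Iio.mp hk
      have hkv : k.val < i.val := hkv0
      have hkFH : 2*k.val+1 < N := by omega
      rw [anC_dual_FH q c hkFH, pow_neg_q_sq]
      by_cases hTk : T k
      · rw [if_pos hTk, if_pos hTk]
        have hee : (q:ℂ) ^ (2*(k.val:ℤ) - 2*(i.val:ℤ) + 2) * q^((N:ℤ) - 2*(k.val:ℤ) - 1)
            = q^((N:ℤ) - 2*(i.val:ℤ) + 1) := by
          rw [← zpow_add₀ hq]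
          congr 1
          ring
        linear_combination (c^2*(q+q⁻¹)*((q^4:ℂ))^(cnt k T)) * hee
      · rw [if_neg hTk, if_neg hTk]
        ring
    rw [hSig]
    have h2 : ((N:ℤ) - 2*(i.val:ℤ) + 1) = (2:ℤ) := by omega
    rw [h2]
    have h2' : (q:ℂ)^(2:ℤ) = q^2 := by
      rw [show (2:ℤ) = ((2:ℕ):ℤ) by norm_num, zpow_natCast]
    rw [h2', pow_neg_q_sq]
    have hcore := coreFin q i T
    set S0 := ∑ k ∈ Finset.Iio i, (if T k then ((q^4:ℂ))^(cnt k T) else 0) with hS0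
    linear_combination (f T * c^2) * hcore + (f T * c^2*S0*(q*q⁻¹+1)) * hqq

def ρA (hq : q ≠ 0) : Cl N q c →ₐ[ℂ] Module.End ℂ (V N) :=
  RingQuot.liftAlgHom ℂ ⟨Lfree q c, Lfree_rel q c hq⟩

lemma ρA_γ (hq : q ≠ 0) (i : Fin N) : ρA q c hq (γ N q c i) = Γop q c i := by
  unfold ρA γ
  rw [RingQuot.liftAlgHom_mkAlgHom_apply]
  exact Lfree_gen q c i

end PartC

section PartD
variable {N : ℕ} (q c : ℂ)

def eb (T : Fin N → Bool) : V N := Pi.single T 1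

lemma genOp_single (a : Fin N) (x y : ℂ) (T : Fin N → Bool) :
    genOp q a x y (eb T) = ((-q^2:ℂ)^(cnt a T) * (if T a then y else x)) • eb (flipS a T) := by
  funext T'
  rw [genOp_apply]
  by_cases hT' : T' = flipS a T
  · subst hT'
    rw [flipS_flipS]
    have h1 : eb (N := N) T T = 1 := by simp [eb]
    have h2 : eb (N := N) (flipS a T) (flipS a T) = 1 := by simp [eb]
    rw [h1, Pi.smul_apply, h2, cnt_flip_of_le (le_refl a), flipS_self]
    cases hTa : T a <;> simp [hTa] <;> ring
  · have h1 : flipS a T' ≠ T := fun hh => hT' (by rw [← hh, flipS_flipS])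
    have h2 : eb (N := N) T (flipS a T') = 0 := by
      simp [eb, Pi.single_apply, h1]
    have h3 : eb (N := N) (flipS a T) T' = 0 := by
      simp only [eb, Pi.single_apply]
      rw [if_neg hT']
    rw [h2, Pi.smul_apply, h3]
    simp

def φB (h : Fin N → Bool) (i : Fin N) : Module.End ℂ (V N) :=
  if h i then Γop q c i else 1

def flipCond (N : ℕ) (h : Fin N → Bool) (k : ℕ) (a : Fin N) : Bool :=
  xor (if 2*a.val+1 ≤ N ∧ k ≤ a.val then h a else false)
      (if 2*a.val+1 < N ∧ k ≤ N-1-a.val then h (dual a) else false)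

def StK (h : Fin N → Bool) (k : ℕ) (T : Fin N → Bool) : Fin N → Bool :=
  fun a => xor (T a) (flipCond N h k a)

def CondK (N : ℕ) (h : Fin N → Bool) (k : ℕ) (T : Fin N → Bool) : Prop :=
  ∀ j : Fin N, k ≤ j.val → h j = true →
    ((2*j.val+1 < N → T j = h (dual j)) ∧ (N < 2*j.val+1 → T (dual j) = true))

lemma StK_top (h T : Fin N → Bool) : StK h N T = T := by
  funext a
  have ha := a.2
  unfold StK flipCond
  rw [if_neg (by omega), if_neg (by omega)]
  simp

lemma flipCond_eq_of_ne {k : ℕ} (hkN : k < N) (h : Fin N → Bool) {b : Fin N}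
    (hb : b ≠ slotI ⟨k, hkN⟩) : flipCond N h k b = flipCond N h (k+1) b := by
  have hbN := b.2
  have hdb : (dual b).val = N - 1 - b.val := rfl
  have hkv : ((⟨k, hkN⟩ : Fin N) : ℕ) = k := rfl
  have hdkv : ((dual (⟨k, hkN⟩ : Fin N)) : ℕ) = N - 1 - k := rfl
  unfold flipCond
  congr 1
  · by_cases h1 : 2*b.val+1 ≤ N ∧ k ≤ b.val
    · by_cases h1' : 2*b.val+1 ≤ N ∧ k+1 ≤ b.val
      · rw [if_pos h1, if_pos h1']
      · -- then b.val = k and 2b+1 ≤ N: b = slotI ⟨k⟩, contra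
        exfalso
        have hbk : b.val = k := by omega
        have : b = slotI ⟨k, hkN⟩ := by
          rw [slot_FH (by omega)]
          exact Fin.ext hbk
        exact hb this
    · rw [if_neg h1, if_neg (by omega)]
  · by_cases h2 : 2*b.val+1 < N ∧ k ≤ N-1-b.val
    · by_cases h2' : 2*b.val+1 < N ∧ k+1 ≤ N-1-b.val
      · rw [if_pos h2, if_pos h2']
      · exfalso
        have hbk : b.val = N-1-k := by omega
        have hSH : N < 2*k+1 := by omega
        have : b = slotI ⟨k, hkN⟩ := by
          rw [slot_SH hSH]
          exact Fin.ext (by rw [hbk]; rfl)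
        exact hb this
    · rw [if_neg h2, if_neg (by omega)]

lemma flipCond_eq_of_hfalse {k : ℕ} (hkN : k < N) {h : Fin N → Bool}
    (hhk : h ⟨k, hkN⟩ = false) (b : Fin N) :
    flipCond N h k b = flipCond N h (k+1) b := by
  by_cases hb : b = slotI ⟨k, hkN⟩
  · subst hb
    have hdd : dual (dual (⟨k, hkN⟩ : Fin N)) = ⟨k, hkN⟩ := dual_dual _
    have hdv : (dual (⟨k, hkN⟩ : Fin N)).val = N - 1 - k := rfl
    have hkv : ((⟨k, hkN⟩ : Fin N) : ℕ) = k := rfl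
    unfold flipCond
    by_cases hty : 2*k+1 ≤ N
    · rw [slot_FH hty]
      congr 1
      · by_cases hA : (2*k+1 ≤ N ∧ k ≤ k)
        · rw [if_pos hA, if_neg (by omega), hhk]
        · omega
      · by_cases hB : 2*k+1 < N ∧ k ≤ N-1-k
        · rw [if_pos hB, if_pos (by omega)]
        · rw [if_neg hB, if_neg (by omega)]
    · rw [slot_SH (by omega)]
      congr 1
      · rw [if_neg (by rw [hdv]; omega), if_neg (by rw [hdv]; omega)]
      · by_cases hB : 2*(dual (⟨k, hkN⟩:Fin N)).val+1 < N ∧ k ≤ N-1-(dual (⟨k, hkN⟩:Fin N)).val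
        · rw [if_pos hB, if_neg (by rw [hdv] at hB ⊢; omega), hdd, hhk]
        · rw [if_neg hB, if_neg (by rw [hdv] at hB ⊢; omega)]
  · exact flipCond_eq_of_ne hkN h hb

lemma flipCond_at_slot {k : ℕ} (hkN : k < N) {h : Fin N → Bool}
    (hhk : h ⟨k, hkN⟩ = true) :
    flipCond N h k (slotI ⟨k, hkN⟩) = !(flipCond N h (k+1) (slotI ⟨k, hkN⟩)) := by
  have hdd : dual (dual (⟨k, hkN⟩ : Fin N)) = ⟨k, hkN⟩ := dual_dual _
  by_cases hty : 2*k+1 ≤ N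
  · rw [slot_FH hty]
    unfold flipCond
    simp only [show ((⟨k, hkN⟩ : Fin N) : ℕ) = k from rfl]
    have c1 : (2*k+1 ≤ N ∧ k ≤ k) := ⟨hty, le_refl k⟩
    have c2 : ¬(2*k+1 ≤ N ∧ k+1 ≤ k) := by omega
    simp only [if_pos c1, if_neg c2, hhk]
    by_cases hB : 2*k+1 < N ∧ k ≤ N-1-k
    · have c4 : (2*k+1 < N ∧ k+1 ≤ N-1-k) := ⟨hB.1, by omega⟩
      simp only [if_pos hB, if_pos c4]
      cases h (dual (⟨k, hkN⟩:Fin N)) <;> rfl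
    · have c4 : ¬(2*k+1 < N ∧ k+1 ≤ N-1-k) := by omega
      simp only [if_neg hB, if_neg c4]
      rfl
  · have hSH : N < 2*((⟨k, hkN⟩ : Fin N)).val+1 := by
      have hkv : ((⟨k, hkN⟩ : Fin N)).val = k := rfl
      omega
    rw [slot_SH hSH]
    unfold flipCond
    simp only [show ((dual (⟨k, hkN⟩ : Fin N)) : ℕ) = N - 1 - k from rfl, hdd]
    have d1 : ¬(2*(N-1-k)+1 ≤ N ∧ k ≤ N-1-k) := by omega
    have d1' : ¬(2*(N-1-k)+1 ≤ N ∧ k+1 ≤ N-1-k) := by omega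
    have d2 : (2*(N-1-k)+1 < N ∧ k ≤ N-1-(N-1-k)) := by omega
    have d2' : ¬(2*(N-1-k)+1 < N ∧ k+1 ≤ N-1-(N-1-k)) := by omega
    simp only [if_neg d1, if_neg d1', if_pos d2, if_neg d2', hhk]
    rfl

lemma StK_succ_of_hfalse {k : ℕ} (hkN : k < N) {h : Fin N → Bool}
    (hhk : h ⟨k, hkN⟩ = false) (T : Fin N → Bool) :
    StK h k T = StK h (k+1) T := by
  funext b
  unfold StK
  rw [flipCond_eq_of_hfalse hkN hhk]

lemma StK_succ_of_htrue {k : ℕ} (hkN : k < N) {h : Fin N → Bool}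
    (hhk : h ⟨k, hkN⟩ = true) (T : Fin N → Bool) :
    flipS (slotI ⟨k, hkN⟩) (StK h (k+1) T) = StK h k T := by
  funext b
  by_cases hb : b = slotI ⟨k, hkN⟩
  · subst hb
    rw [flipS_self]
    unfold StK
    rw [flipCond_at_slot hkN hhk]
    cases T (slotI ⟨k, hkN⟩) <;> cases flipCond N h (k+1) (slotI ⟨k, hkN⟩) <;> rfl
  · rw [flipS_ne hb]
    unfold StK
    rw [flipCond_eq_of_ne hkN h hb]

lemma CondK_succ {k : ℕ} (hkN : k < N) (h : Fin N → Bool) (T : Fin N → Bool) :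
    CondK N h k T ↔ (CondK N h (k+1) T ∧ (h ⟨k, hkN⟩ = true →
      ((2*k+1 < N → T ⟨k, hkN⟩ = h (dual ⟨k, hkN⟩)) ∧
       (N < 2*k+1 → T (dual ⟨k, hkN⟩) = true)))) := by
  constructor
  · intro H
    exact ⟨fun j hj hhj => H j (by omega) hhj, fun hh => H ⟨k, hkN⟩ (le_refl k) hh⟩
  · rintro ⟨H1, H2⟩ j hj hhj
    rcases Nat.eq_or_lt_of_le hj with he | hlt
    · have hje : j = ⟨k, hkN⟩ := Fin.ext he.symm
      subst hje
      exact H2 hhj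
    · exact H1 j (by omega) hhj

lemma StK_at_slot_FH {k : ℕ} (hkN : k < N) (hFH : 2*k+1 < N) (h T : Fin N → Bool) :
    StK h (k+1) T ⟨k, hkN⟩ = xor (T ⟨k, hkN⟩) (h (dual ⟨k, hkN⟩)) := by
  have hkv : ((⟨k, hkN⟩ : Fin N) : ℕ) = k := rfl
  unfold StK flipCond
  rw [if_neg (by omega), if_pos (by constructor <;> omega)]
  cases T (⟨k, hkN⟩ : Fin N) <;> simp

lemma StK_at_slot_mid {k : ℕ} (hkN : k < N) (hmid : 2*k+1 = N) (h T : Fin N → Bool) :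
    StK h (k+1) T ⟨k, hkN⟩ = T ⟨k, hkN⟩ := by
  have hkv : ((⟨k, hkN⟩ : Fin N) : ℕ) = k := rfl
  unfold StK flipCond
  rw [if_neg (by omega), if_neg (by omega)]
  simp

lemma StK_at_slot_SH {k : ℕ} (hkN : k < N) (hSH : N < 2*k+1) (h T : Fin N → Bool) :
    StK h (k+1) T (dual ⟨k, hkN⟩) = T (dual ⟨k, hkN⟩) := by
  have hdv : (dual (⟨k, hkN⟩ : Fin N)).val = N - 1 - k := rfl
  unfold StK flipCond
  rw [if_neg (by rw [hdv]; omega), if_neg (by rw [hdv]; omega)]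
  simp

end PartD

section PartD2
variable {N : ℕ} (q c : ℂ)

lemma qpq_ne (hq : q ≠ 0) (hq4 : q^4 ≠ 1) : q + q⁻¹ ≠ 0 := by
  intro h0
  have h1 : q * (q + q⁻¹) = q^2 + 1 := by field_simp
  rw [h0, mul_zero] at h1
  have h2 : q^2 = -1 := by linear_combination -h1
  have h4 : q^4 = 1 := by
    have : (q:ℂ)^4 = (q^2)^2 := by ring
    rw [this, h2]; norm_num
  exact hq4 h4

lemma negq2_ne (hq : q ≠ 0) : (-q^2 : ℂ) ≠ 0 :=
  neg_ne_zero.mpr (pow_ne_zero 2 hq)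

lemma anC_SH_ne (hq : q ≠ 0) (hc : c ≠ 0) (hq4 : q^4 ≠ 1) {i : Fin N} (hSH : N < 2*i.val+1) :
    anC q c i ≠ 0 := by
  rw [anC_SH q c hSH]
  exact mul_ne_zero (mul_ne_zero (pow_ne_zero 2 hc) (zpow_ne_zero _ hq)) (qpq_ne q hq hq4)

lemma xor_eq_false_iff' (a b : Bool) : (xor a b = false) ↔ a = b := by
  cases a <;> cases b <;> simp

lemma phases (hq : q ≠ 0) (hc : c ≠ 0) (hq4 : q^4 ≠ 1) (h T : Fin N → Bool) :
    ∀ m k, k ≤ N → N - k = m →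
    ∃ s : ℂ, ((((List.finRange N).drop k).map (φB q c h)).prod) (eb T) = s • eb (StK h k T)
      ∧ (s ≠ 0 ↔ CondK N h k T) := by
  intro m
  induction m with
  | zero =>
    intro k hk hm
    have hkN : k = N := by omega
    subst hkN
    rw [List.drop_eq_nil_of_le (by simp)]
    refine ⟨1, ?_, ?_⟩
    · rw [StK_top, List.map_nil, List.prod_nil]
      simp
    · constructor
      · intro _ j hj hhj
        exfalso
        have := j.2
        omega
      · intro _
        exact one_ne_zero
  | succ m ih =>
    intro k hk hm
    have hkN : k < N := by omega
    have hlen : k < (List.finRange N).length := by rw [List.length_finRange]; exact hkN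
    rw [List.drop_eq_getElem_cons hlen, List.map_cons, List.prod_cons]
    have helem : (List.finRange N)[k] = (⟨k, hkN⟩ : Fin N) := by
      rw [List.getElem_finRange]
      apply Fin.ext
      simp
    rw [helem]
    obtain ⟨s, hs, hiff⟩ := ih (k+1) (by omega) (by omega)
    rw [Module.End.mul_apply, hs, map_smul]
    by_cases hhk : h ⟨k, hkN⟩ = true
    · rw [show φB q c h ⟨k, hkN⟩ = Γop q c ⟨k, hkN⟩ from if_pos hhk]
      rcases Nat.lt_trichotomy (2*k+1) N with hty | hty | hty
      · -- first half : creation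
        have htyv : 2*((⟨k, hkN⟩ : Fin N)).val+1 < N := hty
        have hsl : slotI (⟨k, hkN⟩ : Fin N) = ⟨k, hkN⟩ := slot_FH (le_of_lt htyv)
        have e2 : Γop q c (⟨k, hkN⟩ : Fin N) = genOp q ⟨k, hkN⟩ 1 0 := by
          unfold Γop
          rw [hsl, crC_FH c htyv, anC_FH q c htyv]
        rw [e2, genOp_single]
        have hfl : flipS (⟨k, hkN⟩ : Fin N) (StK h (k+1) T) = StK h k T := by
          rw [← hsl]
          exact StK_succ_of_htrue hkN hhk T
        refine ⟨s * ((-q^2:ℂ)^(cnt ⟨k, hkN⟩ (StK h (k+1) T)) *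
            (if StK h (k+1) T ⟨k, hkN⟩ then (0:ℂ) else 1)), ?_, ?_⟩
        · rw [smul_smul, hfl]
        · rw [mul_ne_zero_iff, CondK_succ hkN h T]
          apply and_congr hiff
          constructor
          · intro hB
            intro _
            constructor
            · intro _
              have hSt : StK h (k+1) T ⟨k, hkN⟩ = false := by
                by_contra hcon
                have : StK h (k+1) T ⟨k, hkN⟩ = true := by
                  cases hx : StK h (k+1) T ⟨k, hkN⟩
                  · exact absurd hx hcon
                  · rfl
                rw [this] at hB
                simp at hB
              rw [StK_at_slot_FH hkN hty h T, xor_eq_false_iff'] at hSt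
              exact hSt
            · intro hcon
              omega
          · intro hcl
            have hSt : StK h (k+1) T ⟨k, hkN⟩ = false := by
              rw [StK_at_slot_FH hkN hty h T, xor_eq_false_iff']
              exact (hcl hhk).1 hty
            rw [hSt]
            simp only [Bool.false_eq_true, if_false, mul_one]
            exact pow_ne_zero _ (negq2_ne q hq)
      · -- middle
        have htyv : 2*((⟨k, hkN⟩ : Fin N)).val+1 = N := hty
        have hsl : slotI (⟨k, hkN⟩ : Fin N) = ⟨k, hkN⟩ := slot_FH (le_of_eq htyv)
        have e2 : Γop q c (⟨k, hkN⟩ : Fin N) = genOp q ⟨k, hkN⟩ c c := by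
          unfold Γop
          rw [hsl, crC_mid c htyv, anC_mid q c htyv]
        rw [e2, genOp_single]
        have hfl : flipS (⟨k, hkN⟩ : Fin N) (StK h (k+1) T) = StK h k T := by
          rw [← hsl]
          exact StK_succ_of_htrue hkN hhk T
        refine ⟨s * ((-q^2:ℂ)^(cnt ⟨k, hkN⟩ (StK h (k+1) T)) *
            (if StK h (k+1) T ⟨k, hkN⟩ then c else c)), ?_, ?_⟩
        · rw [smul_smul, hfl]
        · rw [mul_ne_zero_iff, CondK_succ hkN h T]
          apply and_congr hiff
          constructor
          · intro _
            intro _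
            constructor
            · intro hcon; omega
            · intro hcon; omega
          · intro _
            rw [ite_self]
            exact mul_ne_zero (pow_ne_zero _ (negq2_ne q hq)) hc
      · -- second half : annihilation
        have htyv : N < 2*((⟨k, hkN⟩ : Fin N)).val+1 := hty
        have hsl : slotI (⟨k, hkN⟩ : Fin N) = dual ⟨k, hkN⟩ := slot_SH htyv
        have e2 : Γop q c (⟨k, hkN⟩ : Fin N)
            = genOp q (dual ⟨k, hkN⟩) 0 (anC q c ⟨k, hkN⟩) := by
          unfold Γop
          rw [hsl, crC_SH c htyv]
        rw [e2, genOp_single]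
        have hfl : flipS (dual (⟨k, hkN⟩ : Fin N)) (StK h (k+1) T) = StK h k T := by
          rw [← hsl]
          exact StK_succ_of_htrue hkN hhk T
        refine ⟨s * ((-q^2:ℂ)^(cnt (dual ⟨k, hkN⟩) (StK h (k+1) T)) *
            (if StK h (k+1) T (dual ⟨k, hkN⟩) then anC q c ⟨k, hkN⟩ else 0)), ?_, ?_⟩
        · rw [smul_smul, hfl]
        · rw [mul_ne_zero_iff, CondK_succ hkN h T]
          apply and_congr hiff
          rw [StK_at_slot_SH hkN hty h T]
          constructor
          · intro hB
            intro _
            constructor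
            · intro hcon; omega
            · intro _
              by_contra hcon
              have : T (dual (⟨k, hkN⟩ : Fin N)) = false := by
                cases hx : T (dual (⟨k, hkN⟩ : Fin N))
                · rfl
                · exact absurd hx hcon
              rw [this] at hB
              simp at hB
          · intro hcl
            have hT : T (dual (⟨k, hkN⟩ : Fin N)) = true := (hcl hhk).2 hty
            rw [hT]
            simp only [if_true]
            exact mul_ne_zero (pow_ne_zero _ (negq2_ne q hq)) (anC_SH_ne q c hq hc hq4 htyv)
    · -- h k = false : identity factor
      rw [show φB q c h ⟨k, hkN⟩ = 1 from if_neg hhk]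
      refine ⟨s, ?_, ?_⟩
      · rw [Module.End.one_apply, StK_succ_of_hfalse hkN (by
          cases hx : h ⟨k, hkN⟩
          · rfl
          · exact absurd hx hhk) T]
      · rw [hiff, CondK_succ hkN h T]
        constructor
        · intro H
          exact ⟨H, fun hcon => absurd hcon hhk⟩
        · intro H
          exact H.1

end PartD2

section PartD3
variable {N : ℕ} (q c : ℂ)

def Tvec (N : ℕ) (g : Fin N → Bool) : Fin N → Bool :=
  fun a => if 2*a.val+1 < N then g (dual a) else false

def Uvec (N : ℕ) (g : Fin N → Bool) : Fin N → Bool :=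
  fun a => if 2*a.val+1 ≤ N then g a else false

lemma flipCond_zero (h : Fin N → Bool) (a : Fin N) :
    flipCond N h 0 a = xor (if 2*a.val+1 ≤ N then h a else false)
      (if 2*a.val+1 < N then h (dual a) else false) := by
  unfold flipCond
  congr 1
  · by_cases hA : 2*a.val+1 ≤ N
    · rw [if_pos (⟨hA, Nat.zero_le _⟩ : _ ∧ _), if_pos hA]
    · rw [if_neg (by omega), if_neg hA]
  · by_cases hB : 2*a.val+1 < N
    · rw [if_pos (⟨hB, Nat.zero_le _⟩ : _ ∧ _), if_pos hB]
    · rw [if_neg (by omega), if_neg hB]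

lemma dual_FH_lt {j : Fin N} (hSH : N < 2*j.val+1) : 2*(dual j).val+1 < N := by
  have := j.2
  have hd : (dual j).val = N - 1 - j.val := rfl
  omega

lemma CondK_diag (g : Fin N → Bool) : CondK N g 0 (Tvec N g) := by
  intro j _ hgj
  constructor
  · intro hFH
    unfold Tvec
    rw [if_pos hFH]
  · intro hSH
    unfold Tvec
    rw [if_pos (dual_FH_lt hSH), dual_dual, hgj]

lemma St_diag (g : Fin N → Bool) : StK g 0 (Tvec N g) = Uvec N g := by
  funext a
  unfold StK
  rw [flipCond_zero]
  unfold Tvec Uvec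
  rcases Nat.lt_trichotomy (2*a.val+1) N with hty | hty | hty
  · rw [if_pos hty, if_pos (le_of_lt hty)]
    cases g (dual a) <;> cases g a <;> rfl
  · have hn1 : ¬(2*a.val+1 < N) := by omega
    rw [if_neg hn1, if_pos (le_of_eq hty)]
    cases g a <;> rfl
  · have hn1 : ¬(2*a.val+1 < N) := by omega
    have hn2 : ¬(2*a.val+1 ≤ N) := by omega
    rw [if_neg hn1, if_neg hn2]
    rfl

lemma dominance (g h : Fin N → Bool) (hcond : CondK N h 0 (Tvec N g))
    (hst : StK h 0 (Tvec N g) = Uvec N g) : ∀ j, h j = true → g j = true := by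
  intro j hj
  have hstj := congrFun hst j
  unfold StK at hstj
  rw [flipCond_zero] at hstj
  unfold Tvec Uvec at hstj
  rcases Nat.lt_trichotomy (2*j.val+1) N with hty | hty | hty
  · have h1 : (if 2*j.val+1 < N then g (dual j) else false) = h (dual j) :=
      (hcond j (Nat.zero_le _) hj).1 hty
    rw [if_pos hty] at h1
    have e0 : (if 2*j.val+1 < N then g (dual j) else false) = g (dual j) := if_pos hty
    have e1 : (if 2*j.val+1 < N then h (dual j) else false) = h (dual j) := if_pos hty
    have e2 : (if 2*j.val+1 ≤ N then g j else false) = g j := if_pos (le_of_lt hty)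
    have e3 : (if 2*j.val+1 ≤ N then h j else false) = h j := if_pos (le_of_lt hty)
    rw [e0, e1, e2, e3, h1, hj] at hstj
    rw [← hstj]
    cases h (dual j) <;> rfl
  · have hn1 : ¬(2*j.val+1 < N) := by omega
    have e0 : (if 2*j.val+1 < N then g (dual j) else false) = false := if_neg hn1
    have e1 : (if 2*j.val+1 < N then h (dual j) else false) = false := if_neg hn1
    have e2 : (if 2*j.val+1 ≤ N then g j else false) = g j := if_pos (le_of_eq hty)
    have e3 : (if 2*j.val+1 ≤ N then h j else false) = h j := if_pos (le_of_eq hty)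
    rw [e0, e1, e2, e3, hj] at hstj
    rw [← hstj]
    rfl
  · have h2 : (if 2*(dual j).val+1 < N then g (dual (dual j)) else false) = true :=
      (hcond j (Nat.zero_le _) hj).2 hty
    rw [if_pos (dual_FH_lt hty), dual_dual] at h2
    exact h2

lemma ρA_monoB (hq : q ≠ 0) (hh : Fin N → Bool) :
    ρA q c hq (monoB N q c hh) = ((List.finRange N).map (φB q c hh)).prod := by
  unfold monoB
  rw [map_list_prod]
  congr 1
  rw [List.map_map]
  apply List.map_congr_left
  intro i _
  by_cases hi : hh i = true
  · simp only [Function.comp_apply, hi, if_true, φB]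
    exact ρA_γ q c hq i
  · simp only [Function.comp_apply, φB, hi, if_false]
    exact map_one _

def cntT (N : ℕ) (g : Fin N → Bool) : ℕ := (Finset.univ.filter (fun i => g i = true)).card

lemma monoB_indep (hq : q ≠ 0) (hc : c ≠ 0) (hq4 : q^4 ≠ 1) :
    LinearIndependent ℂ (monoB N q c) := by
  apply LinearIndependent.of_comp (ρA q c hq).toLinearMap
  rw [Fintype.linearIndependent_iff]
  intro lam hsum
  have H : ∀ n, ∀ g : Fin N → Bool, cntT N g = n → lam g = 0 := by
    intro n
    induction n using Nat.strong_induction_on with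
    | _ n IH =>
      intro g hgn
      have happ : ∑ hh : Fin N → Bool,
          lam hh * ((ρA q c hq) (monoB N q c hh) (eb (Tvec N g)) (Uvec N g)) = 0 := by
        have h0 := congrArg
          (fun (E : Module.End ℂ (V N)) => E (eb (Tvec N g)) (Uvec N g)) hsum
        simpa [LinearMap.sum_apply, Finset.sum_apply, LinearMap.smul_apply,
          Pi.smul_apply, smul_eq_mul, Function.comp] using h0
      rw [Finset.sum_eq_single g] at happ
      · obtain ⟨sg, hsg, hsgiff⟩ := phases q c hq hc hq4 g (Tvec N g) N 0 (Nat.zero_le _)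
          (by omega)
        rw [List.drop_zero] at hsg
        have hval : (ρA q c hq) (monoB N q c g) (eb (Tvec N g)) = sg • eb (Uvec N g) := by
          rw [ρA_monoB q c hq, hsg, St_diag]
        rw [hval] at happ
        have hone : (sg • eb (N := N) (Uvec N g)) (Uvec N g) = sg := by
          rw [Pi.smul_apply, smul_eq_mul]
          simp [eb]
        rw [hone] at happ
        have hsgne : sg ≠ 0 := hsgiff.mpr (CondK_diag g)
        rcases mul_eq_zero.mp happ with h1 | h1
        · exact h1
        · exact absurd h1 hsgne
      · intro hh _ hne
        obtain ⟨sh, hsh, hshiff⟩ := phases q c hq hc hq4 hh (Tvec N g) N 0 (Nat.zero_le _)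
          (by omega)
        rw [List.drop_zero] at hsh
        have hval : (ρA q c hq) (monoB N q c hh) (eb (Tvec N g)) (Uvec N g)
            = sh * (eb (N := N) (StK hh 0 (Tvec N g)) (Uvec N g)) := by
          rw [ρA_monoB q c hq, hsh, Pi.smul_apply, smul_eq_mul]
        rw [hval]
        by_cases hs0 : sh = 0
        · rw [hs0]; ring
        by_cases hUv : Uvec N g = StK hh 0 (Tvec N g)
        · have hcond := hshiff.mp hs0
          have hdom := dominance g hh hcond hUv.symm
          have hsub : (Finset.univ.filter (fun i => hh i = true))
              ⊆ (Finset.univ.filter (fun i => g i = true)) := by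
            intro i hi
            rw [Finset.mem_filter] at hi ⊢
            exact ⟨Finset.mem_univ i, hdom i hi.2⟩
          have hneq : ∃ i, g i = true ∧ hh i = false := by
            by_contra hcon
            push_neg at hcon
            apply hne
            funext i
            cases hhi : hh i
            · cases hgi : g i
              · rfl
              · exact absurd (hcon i hgi) (by simp [hhi])
            · rw [hdom i hhi]
          obtain ⟨i0, hgi0, hhi0⟩ := hneq
          have hss : (Finset.univ.filter (fun i => hh i = true))
              ⊂ (Finset.univ.filter (fun i => g i = true)) := by
            rw [Finset.ssubset_def]
            refine ⟨hsub, fun hcon2 => ?_⟩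
            have := hcon2 (Finset.mem_filter.mpr ⟨Finset.mem_univ i0, hgi0⟩)
            rw [Finset.mem_filter, hhi0] at this
            exact absurd this.2 (by simp)
          have hlt : cntT N hh < n := by
            rw [← hgn]
            exact Finset.card_lt_card hss
          rw [IH (cntT N hh) hlt hh rfl]
          ring
        · have : eb (N := N) (StK hh 0 (Tvec N g)) (Uvec N g) = 0 := by
            simp only [eb, Pi.single_apply]
            rw [if_neg hUv]
          rw [this]
          ring
      · intro hnm
        exact absurd (Finset.mem_univ g) hnm
  exact fun g => H (cntT N g) g rfl

end PartD3

section PartE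
variable (N : ℕ) (q c : ℂ)

def word (l : List (Fin N)) : Cl N q c := (l.map (γ N q c)).prod

def enc {N : ℕ} (l : List (Fin N)) : ℕ :=
  l.foldl (fun acc i => acc * (N+1) + (i.val+1)) 0

lemma enc_foldl {N : ℕ} (l : List (Fin N)) :
    ∀ acc, l.foldl (fun acc i => acc * (N+1) + (i.val+1)) acc
      = acc * (N+1)^l.length + enc l := by
  induction l with
  | nil => intro acc; simp [enc]
  | cons a t ih =>
    intro acc
    have h2 : enc (a :: t) = (a.val+1) * (N+1)^t.length + enc t := by
      show List.foldl _ 0 (a :: t) = _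
      rw [List.foldl_cons, ih (0 * (N+1) + (a.val+1))]
      ring
    rw [List.foldl_cons, ih (acc * (N+1) + (a.val+1)), List.length_cons, h2]
    ring

lemma enc_append {N : ℕ} (u v : List (Fin N)) :
    enc (u ++ v) = enc u * (N+1)^v.length + enc v := by
  unfold enc
  rw [List.foldl_append]
  exact enc_foldl v _

lemma enc_cons {N : ℕ} (a : Fin N) (t : List (Fin N)) :
    enc (a :: t) = (a.val+1) * (N+1)^t.length + enc t := by
  have h1 : a :: t = [a] ++ t := rfl
  have h2 : enc (N := N) [a] = a.val+1 := by simp [enc]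
  rw [h1, enc_append, h2]

lemma enc_lt {N : ℕ} (l : List (Fin N)) : enc l < (N+1)^l.length := by
  induction l with
  | nil => simp [enc]
  | cons a t ih =>
    rw [enc_cons, List.length_cons]
    have ha := a.2
    calc (a.val+1) * (N+1)^t.length + enc t
        < (a.val+1) * (N+1)^t.length + (N+1)^t.length := by omega
      _ = (a.val+2) * (N+1)^t.length := by ring
      _ ≤ (N+1) * (N+1)^t.length := Nat.mul_le_mul_right _ (by omega)
      _ = (N+1)^(t.length+1) := by ring

lemma enc_ge {N : ℕ} (l : List (Fin N)) (hl : l ≠ []) :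
    (N+1)^(l.length - 1) ≤ enc l := by
  cases l with
  | nil => exact absurd rfl hl
  | cons a t =>
    rw [enc_cons, List.length_cons]
    have h1 : (N+1)^(t.length + 1 - 1) = (N+1)^t.length := by norm_num
    rw [h1]
    calc (N+1)^t.length ≤ (a.val+1)*(N+1)^t.length :=
          Nat.le_mul_of_pos_left _ (by omega)
      _ ≤ (a.val+1)*(N+1)^t.length + enc t := Nat.le_add_right _ _

lemma enc_lt_of_short {N : ℕ} {l₁ l₂ : List (Fin N)} (h : l₁.length < l₂.length) :
    enc l₁ < enc l₂ := by
  have h2 : l₂ ≠ [] := by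
    intro hh
    subst hh
    simp at h
  calc enc l₁ < (N+1)^l₁.length := enc_lt l₁
    _ ≤ (N+1)^(l₂.length - 1) := Nat.pow_le_pow_right (by omega) (by omega)
    _ ≤ enc l₂ := enc_ge l₂ h2

lemma enc_lt_of_head {N : ℕ} {u r₁ r₂ : List (Fin N)} {x y : Fin N}
    (hxy : y < x) (hlen : r₂.length = r₁.length) :
    enc (u ++ y :: r₂) < enc (u ++ x :: r₁) := by
  rw [enc_append, enc_append, enc_cons, enc_cons, List.length_cons, List.length_cons, hlen]
  apply Nat.add_lt_add_left
  have hP : enc r₂ < (N+1)^r₁.length := hlen ▸ enc_lt r₂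
  have hyx : y.val < x.val := hxy
  calc (y.val+1) * (N+1)^r₁.length + enc r₂
      < (y.val+1) * (N+1)^r₁.length + (N+1)^r₁.length := by omega
    _ = (y.val+2) * (N+1)^r₁.length := by ring
    _ ≤ (x.val+1) * (N+1)^r₁.length := Nat.mul_le_mul_right _ (by omega)
    _ ≤ (x.val+1) * (N+1)^r₁.length + enc r₁ := Nat.le_add_right _ _

lemma γ_sq {i : Fin N} (h : 2*i.val+1 ≠ N) : γ N q c i * γ N q c i = 0 := by
  have hrel := RingQuot.mkAlgHom_rel ℂ (Rel.sq (q := q) (c := c) i h)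
  simpa [γ, map_mul, map_zero] using hrel

lemma γ_swap {i j : Fin N} (hlt : i < j) (h : i.val+j.val+1 ≠ N) :
    γ N q c j * γ N q c i = (-(q^2)) • (γ N q c i * γ N q c j) := by
  have hrel := RingQuot.mkAlgHom_rel ℂ (Rel.swap (q := q) (c := c) i j hlt h)
  rw [map_mul, map_smul, map_mul] at hrel
  exact hrel

lemma γ_pairSum (i : Fin N) : RingQuot.mkAlgHom ℂ (Rel N q c) (pairSum N q i)
    = ∑ k ∈ Finset.Iio i, (q ^ (2*(k.val:ℤ) - 2*(i.val:ℤ) + 2)) •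
        (γ N q c k * γ N q c (dual k)) := by
  unfold pairSum
  rw [map_sum]
  apply Finset.sum_congr rfl
  intro k _
  rw [map_smul, map_mul]
  rfl

lemma γ_pair {i : Fin N} (h : 2*i.val+1 < N) :
    γ N q c (dual i) * γ N q c i
      = -(γ N q c i * γ N q c (dual i))
        + (q^2 - q⁻¹^2) • (∑ k ∈ Finset.Iio i, (q ^ (2*(k.val:ℤ) - 2*(i.val:ℤ) + 2)) •
            (γ N q c k * γ N q c (dual k)))
        + algebraMap ℂ _ (c^2 * q^((N:ℤ) - 2*(i.val:ℤ) - 1) * (q + q⁻¹)) := by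
  have hrel := RingQuot.mkAlgHom_rel ℂ (Rel.pair (q := q) (c := c) i h)
  rw [map_mul, map_add, map_add, map_neg, map_mul, map_smul, AlgHom.commutes,
    γ_pairSum] at hrel
  exact hrel

lemma γ_mid {i : Fin N} (h : 2*i.val+1 = N) :
    γ N q c i * γ N q c i
      = (q - q⁻¹) • (∑ k ∈ Finset.Iio i, (q ^ (2*(k.val:ℤ) - 2*(i.val:ℤ) + 2)) •
            (γ N q c k * γ N q c (dual k)))
        + algebraMap ℂ _ (c^2) := by
  have hrel := RingQuot.mkAlgHom_rel ℂ (Rel.middle (q := q) (c := c) i h)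
  rw [map_mul, map_add, map_smul, AlgHom.commutes, γ_pairSum] at hrel
  exact hrel

lemma word_append (u v : List (Fin N)) :
    word N q c (u ++ v) = word N q c u * word N q c v := by
  unfold word
  rw [List.map_append, List.prod_append]

lemma word_cons (a : Fin N) (l : List (Fin N)) :
    word N q c (a :: l) = γ N q c a * word N q c l := by
  unfold word
  rw [List.map_cons, List.prod_cons]

lemma sorted_or_bad : ∀ l : List (Fin N),
    l.Chain' (· < ·) ∨ ∃ u x y v, l = u ++ x :: y :: v ∧ y ≤ x := by
  intro l
  induction l with
  | nil => left; exact List.isChain_nil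
  | cons a t ih =>
    cases t with
    | nil => left; exact List.isChain_singleton _
    | cons b t' =>
      by_cases hab : a < b
      · rcases ih with hch | ⟨u, x, y, v, heq, hyx⟩
        · left
          exact List.isChain_cons_cons.mpr ⟨hab, hch⟩
        · right
          exact ⟨a::u, x, y, v, by rw [heq]; rfl, hyx⟩
      · right
        exact ⟨[], a, b, t', rfl, le_of_not_gt hab⟩

lemma prod_ite_filter (L : List (Fin N)) (p : Fin N → Bool) (f : Fin N → Cl N q c) :
    (L.map (fun i => if p i then f i else 1)).prod = ((L.filter p).map f).prod := by
  induction L with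
  | nil => simp
  | cons a t ih =>
    cases hp : p a
    · simp [List.filter_cons, hp, ih]
    · simp [List.filter_cons, hp, ih]

lemma word_sorted (l : List (Fin N)) (hl : l.Chain' (· < ·)) :
    word N q c l = monoB N q c (fun i => decide (i ∈ l)) := by
  unfold monoB
  rw [prod_ite_filter]
  have hsort1 : ((List.finRange N).filter (fun i => decide (i ∈ l))).Pairwise (· < ·) :=
    (List.pairwise_lt_finRange N).filter _
  have hsort2 : l.Pairwise (· < ·) := (List.isChain_iff_pairwise).mp hl
  have hfil : (List.finRange N).filter (fun i => decide (i ∈ l)) = l := by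
    apply List.Perm.eq_of_pairwise (fun a b _ _ h1 h2 => absurd h2 (lt_asymm h1)) hsort1 hsort2
    rw [List.perm_ext_iff_of_nodup hsort1.nodup hsort2.nodup]
    intro a
    simp [List.mem_filter, List.mem_finRange]
  rw [hfil]
  rfl

lemma word_mem_span : ∀ l : List (Fin N),
    word N q c l ∈ Submodule.span ℂ (Set.range (monoB N q c)) := by
  have key : ∀ n, ∀ l : List (Fin N), enc l < n →
      word N q c l ∈ Submodule.span ℂ (Set.range (monoB N q c)) := by
    intro n
    induction n using Nat.strong_induction_on with
    | _ n IH =>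
      intro l hln
      rcases sorted_or_bad N l with hch | ⟨u, x, y, v, heq, hyx⟩
      · rw [word_sorted N q c l hch]
        exact Submodule.subset_span ⟨_, rfl⟩
      · subst heq
        have hw : word N q c (u ++ x :: y :: v)
            = word N q c u * (γ N q c x * (γ N q c y * word N q c v)) := by
          rw [word_append, word_cons, word_cons]
        have hassoc : γ N q c x * (γ N q c y * word N q c v)
            = (γ N q c x * γ N q c y) * word N q c v := (mul_assoc _ _ _).symm
        rcases eq_or_lt_of_le hyx with rfl | hlt2
        · -- x = y (the variable x is replaced by y)
          by_cases hmid : 2*y.val+1 = N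
          · rw [hw, hassoc, γ_mid N q c hmid, add_mul, mul_add]
            apply Submodule.add_mem
            · rw [smul_mul_assoc, mul_smul_comm]
              apply Submodule.smul_mem
              rw [Finset.sum_mul, Finset.mul_sum]
              apply Submodule.sum_mem
              intro k hk
              rw [smul_mul_assoc, mul_smul_comm]
              apply Submodule.smul_mem
              rw [mul_assoc]
              have hwk : word N q c u * (γ N q c k * (γ N q c (dual k) * word N q c v))
                  = word N q c (u ++ k :: dual k :: v) := by
                rw [word_append, word_cons, word_cons]
              rw [hwk]
              have hkv : k < y := Finset.mem_Iio.mp hk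
              exact IH (enc (u ++ y :: y :: v)) hln _
                (enc_lt_of_head hkv (by simp))
            · rw [← Algebra.smul_def, mul_smul_comm]
              apply Submodule.smul_mem
              have hwuv : word N q c u * word N q c v = word N q c (u ++ v) :=
                (word_append N q c u v).symm
              rw [hwuv]
              exact IH (enc (u ++ y :: y :: v)) hln _
                (enc_lt_of_short (by simp))
          · rw [hw, hassoc, γ_sq N q c hmid, zero_mul, mul_zero]
            exact Submodule.zero_mem _
        · -- y < x
          by_cases hsum : x.val + y.val + 1 = N
          · have h2y : 2*y.val+1 < N := by
              have : y.val < x.val := hlt2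
              omega
            have hx : x = dual y := by
              apply Fin.ext
              have hd : (dual y).val = N - 1 - y.val := rfl
              have := y.2
              omega
            rw [hw, hassoc, hx, γ_pair N q c h2y, add_mul, add_mul, mul_add, mul_add]
            apply Submodule.add_mem
            · apply Submodule.add_mem
              · have hneg : word N q c u * (-(γ N q c y * γ N q c (dual y)) * word N q c v)
                    = -(word N q c u * (γ N q c y * (γ N q c (dual y) * word N q c v))) := by
                  rw [← neg_one_smul ℂ (γ N q c y * γ N q c (dual y)), smul_mul_assoc,
                    mul_smul_comm, neg_one_smul,
                    mul_assoc (γ N q c y) (γ N q c (dual y)) (word N q c v)]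
                rw [hneg]
                apply Submodule.neg_mem
                have hwk : word N q c u * (γ N q c y * (γ N q c (dual y) * word N q c v))
                    = word N q c (u ++ y :: dual y :: v) := by
                  rw [word_append, word_cons, word_cons]
                rw [hwk]
                have hyx2 : y < x := hlt2
                refine IH (enc (u ++ x :: y :: v)) hln _ ?_
                exact enc_lt_of_head hyx2 (by simp)
              · rw [smul_mul_assoc, mul_smul_comm]
                apply Submodule.smul_mem
                rw [Finset.sum_mul, Finset.mul_sum]
                apply Submodule.sum_mem
                intro k hk
                rw [smul_mul_assoc, mul_smul_comm]
                apply Submodule.smul_mem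
                rw [mul_assoc]
                have hwk : word N q c u * (γ N q c k * (γ N q c (dual k) * word N q c v))
                    = word N q c (u ++ k :: dual k :: v) := by
                  rw [word_append, word_cons, word_cons]
                rw [hwk]
                have hkv : k < y := Finset.mem_Iio.mp hk
                have hkx : k < x := lt_trans hkv hlt2
                exact IH (enc (u ++ x :: y :: v)) hln _
                  (enc_lt_of_head hkx (by simp))
            · rw [← Algebra.smul_def, mul_smul_comm]
              apply Submodule.smul_mem
              have hwuv : word N q c u * word N q c v = word N q c (u ++ v) :=
                (word_append N q c u v).symm
              rw [hwuv]
              exact IH (enc (u ++ x :: y :: v)) hln _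
                (enc_lt_of_short (by simp))
          · have hsum' : y.val + x.val + 1 ≠ N := by omega
            rw [hw, hassoc, γ_swap N q c hlt2 hsum', smul_mul_assoc, mul_smul_comm]
            apply Submodule.smul_mem
            rw [mul_assoc]
            have hwk : word N q c u * (γ N q c y * (γ N q c x * word N q c v))
                = word N q c (u ++ y :: x :: v) := by
              rw [word_append, word_cons, word_cons]
            rw [hwk]
            exact IH (enc (u ++ x :: y :: v)) hln _
              (enc_lt_of_head hlt2 (by simp))
  exact fun l => key (enc l + 1) l (Nat.lt_succ_self _)

lemma span_top : (⊤ : Submodule ℂ (Cl N q c))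
    ≤ Submodule.span ℂ (Set.range (monoB N q c)) := by
  intro z _
  obtain ⟨w, hw⟩ := RingQuot.mkAlgHom_surjective ℂ (Rel N q c) z
  rw [← hw]
  have hSW_mul : ∀ x ∈ Submodule.span ℂ (Set.range (word N q c)),
      ∀ y ∈ Submodule.span ℂ (Set.range (word N q c)),
      x * y ∈ Submodule.span ℂ (Set.range (word N q c)) := by
    intro x hx
    induction hx using Submodule.span_induction with
    | mem x hxr =>
      obtain ⟨l, rfl⟩ := hxr
      intro y hy
      induction hy using Submodule.span_induction with
      | mem y hyr =>
        obtain ⟨l', rfl⟩ := hyr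
        rw [← word_append]
        exact Submodule.subset_span ⟨_, rfl⟩
      | zero => rw [mul_zero]; exact Submodule.zero_mem _
      | add a b _ _ ha hb => rw [mul_add]; exact Submodule.add_mem _ ha hb
      | smul r a _ ha => rw [mul_smul_comm]; exact Submodule.smul_mem _ r ha
    | zero => intro y hy; rw [zero_mul]; exact Submodule.zero_mem _
    | add a b _ _ ha hb =>
      intro y hy
      rw [add_mul]
      exact Submodule.add_mem _ (ha y hy) (hb y hy)
    | smul r a _ ha =>
      intro y hy
      rw [smul_mul_assoc]
      exact Submodule.smul_mem _ r (ha y hy)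
  have hword : RingQuot.mkAlgHom ℂ (Rel N q c) w
      ∈ Submodule.span ℂ (Set.range (word N q c)) := by
    refine FreeAlgebra.induction ℂ (Fin N)
      (motive := fun w => RingQuot.mkAlgHom ℂ (Rel N q c) w
        ∈ Submodule.span ℂ (Set.range (word N q c))) ?_ ?_ ?_ ?_ w
    · intro r
      rw [AlgHom.commutes, Algebra.algebraMap_eq_smul_one]
      apply Submodule.smul_mem
      exact Submodule.subset_span ⟨[], rfl⟩
    · intro x
      exact Submodule.subset_span ⟨[x], by simp [word, γ, gen]⟩
    · intro a b ha hb
      rw [map_mul]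
      exact hSW_mul _ ha _ hb
    · intro a b ha hb
      rw [map_add]
      exact Submodule.add_mem _ ha hb
  have hle : Submodule.span ℂ (Set.range (word N q c))
      ≤ Submodule.span ℂ (Set.range (monoB N q c)) := by
    rw [Submodule.span_le]
    rintro _ ⟨l, rfl⟩
    exact word_mem_span N q c l
  exact hle hword

end PartE

/-- the ordered monomials `γ_1^{i_1}⋯γ_N^{i_N}`, `i_k ∈ {0,1}`, form a
vector space basis of `Cl_N(q,c)`; in particular `dim Cl_N(q,c) = 2^N`. -/
theorem monomials_form_basis (N : ℕ) (hN : 3 ≤ N) (q c : ℂ)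
    (hq : q ≠ 0) (hqr : ∀ m : ℕ, 0 < m → q ^ m ≠ 1) (hc : c ≠ 0) :
    (∃ b : Module.Basis (Fin N → Bool) ℂ (Cl N q c), ∀ f, b f = monoB N q c f) ∧
    Module.rank ℂ (Cl N q c) = 2 ^ N := by
  have hq4 : q^4 ≠ 1 := hqr 4 (by norm_num)
  have hind : LinearIndependent ℂ (monoB N q c) := monoB_indep q c hq hc hq4
  have hspan : ⊤ ≤ Submodule.span ℂ (Set.range (monoB N q c)) := span_top N q c
  refine ⟨⟨Module.Basis.mk hind hspan, fun f => congrFun (Module.Basis.coe_mk hind hspan) f⟩, ?_⟩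
  rw [rank_eq_card_basis (Module.Basis.mk hind hspan)]
  have hcard : Fintype.card (Fin N → Bool) = 2 ^ N := by
    rw [Fintype.card_fun, Fintype.card_bool, Fintype.card_fin]
  rw [hcard]
  push_cast
  rfl

end FRT
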